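/- Let T be a real m×n matrix, K a real p×n matrix, let (A_i, B_i) for i = 1,…,n_p be pairs of real n×n and n×p matrices, let w_l ∈ ℝⁿ for l = 1,…,n_w, let v ∈ ℝ^p, and let τ, τ' ∈ ℝ^m. Suppose for each i there exists a nonnegative real m×m matrix P_i with P_i T = T (A_i + B_i K), and that for all i and l one has P_i τ + T B_i v + T w_l ≤ τ'. Then for every z ∈ ℝⁿ with T z ≤ τ, every (A, B) in the convex hull of {(A_1,B_1),…,(A_{n_p},B_{n_p})}, and every w in the convex hull of {w_1,…,w_{n_w}}, one has T ((A + B K) z + B v + w) ≤ τ', i.e. the successor state lies in the tube {z : T z ≤ τ'}. -/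

import Mathlib

set_option maxHeartbeats 1600000


/-- Soundness of the one-step tube-propagation constraint for general complexity
tubes: given nonnegative Farkas certificates `P i` with `P i * T = T (A i + B i K)`
and `P i τ + T B i v + T w l ≤ τ'` for all vertices `i`, `l`, every successor
`(A + B K) z + B v + w` of a point `z` of the tube `{z : T z ≤ τ}`, for `(A, B)`
in the convex hull of the vertex matrix pairs and `w` in the convex hull of the
disturbance vertices, lies in the tube `{z : T z ≤ τ'}`. -/
theorem tube_propagation_sound {n m p np nw : ℕ}
    (T : Matrix (Fin m) (Fin n) ℝ) (K : Matrix (Fin p) (Fin n) ℝ)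
    (A : Fin np → Matrix (Fin n) (Fin n) ℝ) (B : Fin np → Matrix (Fin n) (Fin p) ℝ)
    (w : Fin nw → Fin n → ℝ) (v : Fin p → ℝ) (τ τ' : Fin m → ℝ)
    (P : Fin np → Matrix (Fin m) (Fin m) ℝ)
    (hPnonneg : ∀ i, ∀ r s, 0 ≤ P i r s)
    (hPeq : ∀ i, P i * T = T * (A i + B i * K))
    (hPineq : ∀ i l, (P i).mulVec τ + T.mulVec ((B i).mulVec v) + T.mulVec (w l) ≤ τ') :
    ∀ z : Fin n → ℝ, T.mulVec z ≤ τ →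
      ∀ AB ∈ convexHull ℝ (Set.range fun i => (A i, B i)),
        ∀ ww ∈ convexHull ℝ (Set.range w),
          T.mulVec ((AB.1 + AB.2 * K).mulVec z + AB.2.mulVec v + ww) ≤ τ' := by
  intro z hz AB hAB ww hww
  have hmem : (AB, ww) ∈ convexHull ℝ
      ((Set.range fun i => (A i, B i)) ×ˢ Set.range w) := by
    rw [convexHull_prod]; exact ⟨hAB, hww⟩
  set C : Set ((Matrix (Fin n) (Fin n) ℝ × Matrix (Fin n) (Fin p) ℝ) × (Fin n → ℝ)) :=
    {q | T.mulVec ((q.1.1 + q.1.2 * K).mulVec z + q.1.2.mulVec v + q.2) ≤ τ'} with hC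
  have hF : ∀ (q q' : (Matrix (Fin n) (Fin n) ℝ × Matrix (Fin n) (Fin p) ℝ) × (Fin n → ℝ))
      (a b : ℝ),
      T.mulVec (((a • q + b • q').1.1 + (a • q + b • q').1.2 * K).mulVec z
          + (a • q + b • q').1.2.mulVec v + (a • q + b • q').2)
        = a • T.mulVec ((q.1.1 + q.1.2 * K).mulVec z + q.1.2.mulVec v + q.2)
          + b • T.mulVec ((q'.1.1 + q'.1.2 * K).mulVec z + q'.1.2.mulVec v + q'.2) := by
    intro q q' a b
    simp only [Prod.fst_add, Prod.snd_add, Prod.smul_fst, Prod.smul_snd,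
      Matrix.mulVec_add, Matrix.add_mulVec, smul_mul_assoc, add_mul, Matrix.add_mul, Matrix.smul_mul,
      Matrix.smul_mulVec, Matrix.mulVec_smul, smul_add]
    abel
  have hvert : ((Set.range fun i => (A i, B i)) ×ˢ Set.range w) ⊆ C := by
    rintro ⟨q1, q2⟩ ⟨⟨i, hi⟩, l, hl⟩
    simp only at hi
    subst hi; subst hl
    have h1 : T.mulVec ((A i + B i * K).mulVec z) = (P i).mulVec (T.mulVec z) := by
      rw [Matrix.mulVec_mulVec, ← hPeq, ← Matrix.mulVec_mulVec]
    have h2 : (P i).mulVec (T.mulVec z) ≤ (P i).mulVec τ := by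
      intro r
      simp only [Matrix.mulVec, dotProduct]
      exact Finset.sum_le_sum fun s _ =>
        mul_le_mul_of_nonneg_left (hz s) (hPnonneg i r s)
    have : T.mulVec ((A i + B i * K).mulVec z + (B i).mulVec v + w l)
        ≤ (P i).mulVec τ + T.mulVec ((B i).mulVec v) + T.mulVec (w l) := by
      simp only [Matrix.mulVec_add, h1]
      exact add_le_add (add_le_add h2 le_rfl) le_rfl
    exact this.trans (hPineq i l)
  have hconv : Convex ℝ C := by
    intro q hq q' hq' a b ha hb hab
    simp only [hC, Set.mem_setOf_eq] at hq hq' ⊢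
    rw [hF q q' a b]
    calc a • T.mulVec ((q.1.1 + q.1.2 * K).mulVec z + q.1.2.mulVec v + q.2)
          + b • T.mulVec ((q'.1.1 + q'.1.2 * K).mulVec z + q'.1.2.mulVec v + q'.2)
        ≤ a • τ' + b • τ' :=
          add_le_add (smul_le_smul_of_nonneg_left hq ha)
            (smul_le_smul_of_nonneg_left hq' hb)
      _ = τ' := by rw [← add_smul, hab, one_smul]
  have h : (AB, ww) ∈ C := convexHull_min hvert hconv hmem
  rw [hC, Set.mem_setOf_eq] at h
  exact h
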